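/- Fix ρ with 0 < ρ < 1 and a positive integer d. The polynomial P(z) = ((1+ρ)/2)(1+z)^d + ((1−ρ)/2)(1−z)^d has all roots of the form (ω − t)/(ω + t) where ω ranges over complex numbers with ω^d = −1 and t = ((1+ρ)/(1−ρ))^{1/d} > 1. In particular, P has no roots in the complement of the closed disk of center −(t²+1)/(t²−1) and radius 2t/(t²−1). -/

import Mathlib

/-- The local polynomial of the weighted even subgraphs model has all roots of
the form `(ω - t)/(ω + t)` with `ω^d = -1`, where `t = ((1+ρ)/(1-ρ))^{1/d} > 1`;
in particular it has no roots outside the closed disk of center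
`-(t²+1)/(t²-1)` and radius `2t/(t²-1)`. -/
theorem stmt11 (ρ : ℝ) (h0 : 0 < ρ) (h1 : ρ < 1) (d : ℕ) (hd : 1 ≤ d)
    (t : ℝ) (ht : t = ((1 + ρ) / (1 - ρ)) ^ ((1 : ℝ) / d)) :
    1 < t ∧
    (∀ z : ℂ,
      (((1 + ρ) / 2 : ℝ) : ℂ) * (1 + z) ^ d + (((1 - ρ) / 2 : ℝ) : ℂ) * (1 - z) ^ d = 0 →
      ∃ ω : ℂ, ω ^ d = -1 ∧ z = (ω - (t : ℂ)) / (ω + (t : ℂ))) ∧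
    (∀ z : ℂ,
      z ∉ Metric.closedBall ((-((t ^ 2 + 1) / (t ^ 2 - 1)) : ℝ) : ℂ)
            (2 * t / (t ^ 2 - 1)) →
      (((1 + ρ) / 2 : ℝ) : ℂ) * (1 + z) ^ d + (((1 - ρ) / 2 : ℝ) : ℂ) * (1 - z) ^ d ≠ 0) := by
  have hd0 : (d : ℝ) ≠ 0 := Nat.cast_ne_zero.mpr (by omega)
  have h1ρ : (0:ℝ) < 1 - ρ := by linarith
  have hbase : (1:ℝ) < (1 + ρ) / (1 - ρ) := by
    rw [lt_div_iff₀ h1ρ]; linarith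
  have ht1 : 1 < t := by
    rw [ht]
    exact (Real.one_lt_rpow_iff_of_pos (by linarith)).mpr
      (Or.inl ⟨hbase, by positivity⟩)
  have ht0 : (0:ℝ) < t := by linarith
  have htd : t ^ d = (1 + ρ) / (1 - ρ) := by
    rw [ht, ← Real.rpow_natCast (((1 + ρ) / (1 - ρ)) ^ ((1 : ℝ) / d)) d,
      ← Real.rpow_mul (by positivity), one_div, inv_mul_cancel₀ hd0, Real.rpow_one]
  -- complex versions
  have hTd : ((t:ℂ)) ^ d = ((1 + ρ : ℝ) : ℂ) / ((1 - ρ : ℝ) : ℂ) := by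
    have := congrArg (Complex.ofReal) htd
    push_cast at this ⊢
    rw [this]
  have hB0 : ((1 - ρ : ℝ) : ℂ) ≠ 0 := Complex.ofReal_ne_zero.mpr h1ρ.ne'
  have hA0 : ((1 + ρ : ℝ) : ℂ) ≠ 0 :=
    Complex.ofReal_ne_zero.mpr (by positivity)
  have hT0 : ((t:ℝ):ℂ) ≠ 0 := Complex.ofReal_ne_zero.mpr ht0.ne'
  have key : ∀ z : ℂ,
      (((1 + ρ) / 2 : ℝ) : ℂ) * (1 + z) ^ d + (((1 - ρ) / 2 : ℝ) : ℂ) * (1 - z) ^ d = 0 →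
      ∃ ω : ℂ, ω ^ d = -1 ∧ z = (ω - (t : ℂ)) / (ω + (t : ℂ)) := by
    intro z hz
    have heq : ((1 + ρ : ℝ) : ℂ) * (1 + z) ^ d = -(((1 - ρ : ℝ) : ℂ) * (1 - z) ^ d) := by
      push_cast at hz ⊢
      ring_nf at hz ⊢
      linear_combination 2 * hz
    have hz1 : (1 : ℂ) - z ≠ 0 := by
      intro h
      have hz' : z = 1 := by linear_combination -h
      have h2d : ((1 + ρ : ℝ) : ℂ) * 2 ^ d = 0 := by
        rw [hz'] at heq
        simpa [zero_pow (by omega : d ≠ 0)] using heq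
      rcases mul_eq_zero.mp h2d with h' | h'
      · exact hA0 h'
      · exact pow_ne_zero d two_ne_zero h'
    refine ⟨(t : ℂ) * (1 + z) / (1 - z), ?_, ?_⟩
    · rw [div_pow, mul_pow, hTd]
      rw [div_eq_iff (pow_ne_zero d hz1), div_mul_eq_mul_div, div_eq_iff hB0]
      linear_combination heq
    · have hden : (t : ℂ) * (1 + z) / (1 - z) + (t : ℂ) = (t : ℂ) * 2 / (1 - z) := by
        field_simp; ring
      have hnum' : (t:ℂ) * (1 + z) / (1 - z) - (t:ℂ) = (t:ℂ) * (2 * z) / (1 - z) := by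
        field_simp; ring
      rw [hnum', hden]
      rw [div_div_div_comm, div_self hz1, div_one,
        mul_div_mul_left _ _ hT0,
        mul_div_cancel_left₀ z (two_ne_zero : (2:ℂ) ≠ 0)]
  refine ⟨ht1, key, ?_⟩
  intro z hz hP
  apply hz
  obtain ⟨ω, hω, hzω⟩ := key z hP
  have habs : ‖ω‖ = 1 := by
    have h1 : ‖ω‖ ^ d = 1 := by
      rw [← norm_pow, hω]; simp
    by_contra hne
    rcases lt_or_gt_of_ne hne with hlt | hgt
    · have := pow_lt_one₀ (norm_nonneg ω) hlt (by omega : d ≠ 0)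
      rw [h1] at this; exact lt_irrefl _ this
    · have := one_lt_pow₀ hgt (by omega : d ≠ 0)
      rw [h1] at this; exact lt_irrefl _ this
  have hωT : ω + (t:ℂ) ≠ 0 := by
    intro h
    have : ‖ω‖ = t := by
      have : ω = -(t:ℂ) := by linear_combination h
      rw [this]
      simpa using abs_of_pos ht0
    linarith [habs, this]
  have hT2 : ((t:ℂ))^2 - 1 ≠ 0 := by
    intro h
    have : (t:ℝ)^2 - 1 = 0 := by exact_mod_cast h
    nlinarith
  -- rewrite z + c
  have hform : z - ((-((t ^ 2 + 1) / (t ^ 2 - 1)) : ℝ) : ℂ)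
      = 2 * (t:ℂ) * ((t:ℂ) * ω + 1) / ((ω + (t:ℂ)) * (((t:ℂ))^2 - 1)) := by
    rw [hzω]
    push_cast
    field_simp
    ring
  have hnum : ‖(t:ℂ) * ω + 1‖ = ‖ω + (t:ℂ)‖ := by
    have hmc : ω * (starRingEnd ℂ) ω = 1 := by
      rw [Complex.mul_conj]
      norm_cast
      rw [Complex.normSq_eq_norm_sq, habs]; norm_num
    have h1 : (t:ℂ) * ω + 1 = ω * ((t:ℂ) + (starRingEnd ℂ) ω) := by
      rw [mul_add, hmc]; ring
    have h2 : (t:ℂ) + (starRingEnd ℂ) ω = (starRingEnd ℂ) ((t:ℂ) + ω) := by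
      simp [map_add, Complex.conj_ofReal]
    rw [h1, norm_mul, habs, one_mul, h2, Complex.norm_conj, add_comm]
  have habsT2 : ‖((t:ℂ))^2 - 1‖ = t^2 - 1 := by
    have : ((t:ℂ))^2 - 1 = ((t^2 - 1 : ℝ) : ℂ) := by push_cast; ring
    rw [this, Complex.norm_real, Real.norm_eq_abs, abs_of_pos (by nlinarith)]
  rw [Metric.mem_closedBall, Complex.dist_eq, hform, norm_div, norm_mul, norm_mul, norm_mul,
    hnum, habsT2]
  have hωT' : (0:ℝ) < ‖ω + (t:ℂ)‖ := by
    simpa [norm_pos_iff] using hωT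
  rw [Complex.norm_real, Real.norm_eq_abs, abs_of_pos ht0]
  have h2a : ‖(2:ℂ)‖ = 2 := by norm_num
  rw [h2a]
  apply le_of_eq
  have hr : (t:ℝ)^2 - 1 ≠ 0 := by nlinarith
  field_simp [hωT'.ne']
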